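/- Let φ : [0,2] × ℝ → ℝ be continuous with φ_c(0) > 0 for all c ∈ [0,2] and φ_2^n(0) < 0 for all n ≥ 2, and define Φ_n(c) = φ_c^n(0). If n ≥ 2 and Φ_{n-1}(ĉ) = 0 for some ĉ ∈ [0,2), then Φ_n(ĉ) > 0, and hence by the intermediate value theorem Φ_n(c) = 0 has a solution in (ĉ, 2). -/

import Mathlib

theorem next_zero_exists
    (φ : ℝ → ℝ → ℝ)
    (hcont : ContinuousOn (fun p : ℝ × ℝ => φ p.1 p.2) (Set.Icc 0 2 ×ˢ Set.univ))
    (hpos : ∀ c ∈ Set.Icc (0:ℝ) 2, φ c 0 > 0)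
    (hneg : ∀ n : ℕ, 2 ≤ n → (φ 2)^[n] 0 < 0)
    (n : ℕ) (hn : 2 ≤ n)
    (c_hat : ℝ) (hc_hat : c_hat ∈ Set.Ico (0:ℝ) 2)
    (hzero : (φ c_hat)^[n-1] 0 = 0) :
    (φ c_hat)^[n] 0 > 0 ∧ ∃ c ∈ Set.Ioo c_hat 2, (φ c)^[n] 0 = 0 := by
  have hcmem : c_hat ∈ Set.Icc (0:ℝ) 2 := ⟨hc_hat.1, hc_hat.2.le⟩
  have hposn : (φ c_hat)^[n] 0 > 0 := by
    have hn1 : n = (n - 1) + 1 := (Nat.succ_pred_eq_of_pos (by omega)).symm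
    rw [hn1, Function.iterate_succ_apply', hzero]
    exact hpos c_hat hcmem
  refine ⟨hposn, ?_⟩
  have hΦcont : ∀ k : ℕ, ContinuousOn (fun c => (φ c)^[k] 0) (Set.Icc (0:ℝ) 2) := by
    intro k
    induction k with
    | zero => simpa using continuousOn_const
    | succ k ih =>
      have : (fun c => (φ c)^[k+1] 0) =
          (fun p : ℝ × ℝ => φ p.1 p.2) ∘ (fun c => (c, (φ c)^[k] 0)) := by
        funext c; simp [Function.iterate_succ_apply']
      rw [this]
      exact hcont.comp (ContinuousOn.prodMk continuousOn_id ih)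
        (fun c hc => Set.mk_mem_prod hc (Set.mem_univ _))
  set f : ℝ → ℝ := fun c => (φ c)^[n] 0 with hf
  have hneg2 : f 2 < 0 := hneg n hn
  have hsub : Set.Ioo (f 2) (f c_hat) ⊆ f '' Set.Ioo c_hat 2 :=
    intermediate_value_Ioo' hc_hat.2.le
      ((hΦcont n).mono (Set.Icc_subset_Icc hc_hat.1 le_rfl))
  obtain ⟨c, hcmem', hc0⟩ := hsub ⟨hneg2, hposn⟩
  exact ⟨c, hcmem', hc0⟩
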